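/- arXiv:2301.09216 — 2 statements merged into one kernel-verified Lean document; each statement's English description precedes it below -/
import Mathlib

section
/- Let ({\bf T},σ) be a connected ({\bf T},σ)-graph built from {\bf T} = (T_1,…,T_m) with each T_i a k-tuple of distinct indices in [km], black edges joining consecutive entries of each T_i, solid red edges joining repeated indices, and dotted red edges joining indices exchanged by σ ∈ Sym(Range({\bf T})). Let a(σ) be the number of non-fixed points of σ and |{\bf T}| = |∪_i T_i|. Then km − |{\bf T}| + a(σ) ≥ m − 1 + 1[σ ≠ id]. -/
open Finset


section
variable {m k : ℕ}

lemma my_exists_step {V : Type*} (G : SimpleGraph V) (hc : G.Connected) (v v0 : V)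
    (hne : v ≠ v0) : ∃ u, G.Adj v u ∧ G.dist u v0 + 1 ≤ G.dist v v0 := by
  obtain ⟨p, hp⟩ := (hc v v0).exists_walk_length_eq_dist
  cases p with
  | nil => exact absurd rfl hne
  | cons hadj q =>
      refine ⟨_, hadj, ?_⟩
      rw [← hp]
      simpa using Nat.succ_le_succ (SimpleGraph.dist_le q)

lemma my_card_le_edges {V : Type*} [Fintype V] [DecidableEq V] (G : SimpleGraph V)
    [Fintype G.edgeSet] (hc : G.Connected) :
    Fintype.card V ≤ G.edgeFinset.card + 1 := by
  classical
  obtain ⟨v0⟩ := hc.nonempty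
  have step : ∀ v : V, v ≠ v0 → ∃ u, G.Adj v u ∧ G.dist u v0 + 1 ≤ G.dist v v0 :=
    fun v hv => my_exists_step G hc v v0 hv
  set f : V → Sym2 V := fun v =>
    if hv : v = v0 then s(v0, v0) else s(v, (step v hv).choose) with hf
  have hinj : Set.InjOn f (univ.erase v0) := by
    intro a ha b hb hab
    have ha' : a ≠ v0 := (Finset.mem_erase.mp ha).1
    have hb' : b ≠ v0 := (Finset.mem_erase.mp hb).1
    have hsa := (step a ha').choose_spec
    have hsb := (step b hb').choose_spec
    rw [hf] at hab
    simp only [dif_neg ha', dif_neg hb', Sym2.eq_iff] at hab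
    rcases hab with ⟨h1, h2⟩ | ⟨h1, h2⟩
    · exact h1
    · exfalso
      rw [← h1] at hsb
      rw [h2] at hsa
      omega
  have hmem : ∀ a ∈ univ.erase v0, f a ∈ G.edgeFinset := by
    intro a ha
    have ha' : a ≠ v0 := (Finset.mem_erase.mp ha).1
    rw [hf]
    simp only [dif_neg ha', SimpleGraph.mem_edgeFinset, SimpleGraph.mem_edgeSet]
    exact (step a ha').choose_spec.1
  have := Finset.card_le_card_of_injOn f hmem hinj
  rw [Finset.card_erase_of_mem (Finset.mem_univ v0), Finset.card_univ] at this
  omega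

end


/-- for a connected `(T,σ)`-graph (black edges along each tuple `T_i`, solid
red edges between repeated indices, dotted red edges between indices exchanged by `σ`),
one has `km − |T| + a(σ) ≥ m − 1 + 1[σ ≠ id]`. -/
theorem connected_graph_count (m k : ℕ) (hm : 1 ≤ m) (hk : 1 ≤ k)
    (T : Fin m → Fin k → Fin (k * m))
    (hinj : ∀ i, Function.Injective (T i))
    (σ : Equiv.Perm (Fin (k * m)))
    (hσ : ∀ q, (∀ i j, T i j ≠ q) → σ q = q)
    (G : SimpleGraph (Fin m × Fin k))
    (hG : G = SimpleGraph.fromRel (fun v w =>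
      (v.1 = w.1 ∧ (v.2.val + 1 = w.2.val ∨ w.2.val + 1 = v.2.val)) ∨
      (T v.1 v.2 = T w.1 w.2) ∨
      (T v.1 v.2 ≠ T w.1 w.2 ∧
        (σ (T v.1 v.2) = T w.1 w.2 ∨ σ (T w.1 w.2) = T v.1 v.2))))
    (hconn : G.Connected) :
    k * m - (Finset.image (fun p : Fin m × Fin k => T p.1 p.2) Finset.univ).card
        + σ.support.card
      ≥ m - 1 + (if σ ≠ 1 then 1 else 0) := by
  classical
  have hkm : 1 ≤ k * m := Nat.mul_le_mul hk hm
  set S : Finset (Fin (k * m)) :=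
    Finset.image (fun p : Fin m × Fin k => T p.1 p.2) Finset.univ with hSdef
  have memS : ∀ i j, T i j ∈ S := fun i j =>
    Finset.mem_image.mpr ⟨(i, j), Finset.mem_univ _, rfl⟩
  have memSup : ∀ q : Fin (k * m), σ q ≠ q → q ∈ S := by
    intro q h
    by_contra h'
    exact h (hσ q (fun i j hij => h' (hij ▸ memS i j)))
  -- choose q0
  obtain ⟨q0, hq0⟩ : ∃ q0 : Fin (k * m), σ ≠ 1 → σ q0 ≠ q0 := by
    by_cases h : σ = 1
    · exact ⟨⟨0, hkm⟩, fun h' => absurd h h'⟩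
    · by_contra hc
      push_neg at hc
      exact h (Equiv.ext fun q => (hc q).2)
  set D : Finset (Fin (k * m)) := σ.support.erase q0 with hDdef
  -- the auxiliary graph
  set R : (Fin m ⊕ {q : Fin (k * m) // q ∈ S}) → (Fin m ⊕ {q : Fin (k * m) // q ∈ S}) → Prop :=
    fun v w =>
      (∃ (i : Fin m) (x : {q : Fin (k * m) // q ∈ S}),
        v = Sum.inl i ∧ w = Sum.inr x ∧ ∃ j, T i j = x.val) ∨
      (∃ (x y : {q : Fin (k * m) // q ∈ S}),
        v = Sum.inr x ∧ w = Sum.inr y ∧ x.val ∈ D ∧ σ x.val = y.val) with hRdef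
  set G' : SimpleGraph (Fin m ⊕ {q : Fin (k * m) // q ∈ S}) := SimpleGraph.fromRel R with hG'def
  -- basic adjacencies
  have adjIV : ∀ (i : Fin m) (j : Fin k),
      G'.Adj (Sum.inl i) (Sum.inr ⟨T i j, memS i j⟩) := by
    intro i j
    rw [hG'def, SimpleGraph.fromRel_adj]
    exact ⟨by simp, Or.inl (Or.inl ⟨i, ⟨T i j, memS i j⟩, rfl, rfl, j, rfl⟩)⟩
  have adjVV : ∀ (q : Fin (k * m)) (hq : q ∈ D) (h1 : q ∈ S) (h2 : σ q ∈ S),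
      G'.Adj (Sum.inr ⟨q, h1⟩) (Sum.inr ⟨σ q, h2⟩) := by
    intro q hq h1 h2
    have hne : σ q ≠ q := Equiv.Perm.mem_support.mp (Finset.mem_of_mem_erase hq)
    rw [hG'def, SimpleGraph.fromRel_adj]
    refine ⟨by simp [Subtype.ext_iff]; exact fun h => hne h.symm, Or.inl (Or.inr ?_)⟩
    exact ⟨⟨q, h1⟩, ⟨σ q, h2⟩, rfl, rfl, hq, rfl⟩
  have memSupS : ∀ q : Fin (k * m), σ q ≠ q → σ q ∈ S := by
    intro q h
    exact memSup (σ q) (fun h' => h (σ.injective h'))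
  have fixpow : ∀ (x : Fin (k * m)), σ x = x → ∀ n : ℕ, (σ ^ n) x = x := by
    intro x hfix n
    induction n with
    | zero => simp
    | succ n ih2 => rw [pow_succ, Equiv.Perm.mul_apply, hfix]; exact ih2
  -- reachability around q0 through the cycle
  have reachPow : ∀ (n : ℕ) (q : Fin (k * m)) (hq : σ q ≠ q) (hq0' : σ q0 ≠ q0),
      (σ ^ n) q = q0 →
      G'.Reachable (Sum.inr ⟨q, memSup q hq⟩) (Sum.inr ⟨q0, memSup q0 hq0'⟩) := by
    intro n
    induction n with
    | zero =>
        intro q hq hq0' h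
        rw [pow_zero, Equiv.Perm.one_apply] at h
        subst h
        rfl
    | succ n ih =>
        intro q hq hq0' h
        by_cases hqq0 : q = q0
        · subst hqq0; rfl
        · have hqD : q ∈ D := Finset.mem_erase.mpr ⟨hqq0, Equiv.Perm.mem_support.mpr hq⟩
          have hstep : (σ ^ n) (σ q) = q0 := by
            rw [pow_succ, Equiv.Perm.mul_apply] at h; exact h
          by_cases hfix : σ (σ q) = σ q
          · -- then σ q is fixed, so σ^n (σ q) = σ q, hence σ q = q0
            have : (σ ^ n) (σ q) = σ q := fixpow (σ q) hfix n
            have hq0eq : σ q = q0 := by rw [← hstep, this]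
            have := (adjVV q hqD (memSup q hq) (memSupS q hq)).reachable
            have heq : (⟨σ q, memSupS q hq⟩ : {q : Fin (k * m) // q ∈ S})
                = ⟨q0, memSup q0 hq0'⟩ := Subtype.ext hq0eq
            rw [heq] at this
            exact this
          · exact (adjVV q hqD (memSup q hq) (memSupS q hq)).reachable.trans
              (ih (σ q) hfix hq0' hstep)
  have reachVV : ∀ (q q' : Fin (k * m)) (h : σ q = q') (hne : q ≠ q')
      (h1 : q ∈ S) (h2 : q' ∈ S),
      G'.Reachable (Sum.inr ⟨q, h1⟩) (Sum.inr ⟨q', h2⟩) := by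
    intro q q' h hne h1 h2
    have hq : σ q ≠ q := by rw [h]; exact Ne.symm hne
    by_cases hqD : q ∈ D
    · have := (adjVV q hqD h1 (memSupS q hq)).reachable
      have heq : (⟨σ q, memSupS q hq⟩ : {q : Fin (k * m) // q ∈ S})
          = ⟨q', h2⟩ := Subtype.ext h
      rw [heq] at this
      exact this
    · -- q = q0, go around the cycle
      have hqq0 : q = q0 := by
        by_contra hne'
        exact hqD (Finset.mem_erase.mpr ⟨hne', Equiv.Perm.mem_support.mpr hq⟩)
      subst hqq0
      have hq' : σ q' ≠ q' := fun hfix => hne (σ.injective (h.trans hfix.symm))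
      have hord : 1 ≤ orderOf σ := orderOf_pos σ
      have hpow : (σ ^ (orderOf σ - 1)) q' = q := by
        rw [← h, ← Equiv.Perm.mul_apply, ← pow_succ]
        have : orderOf σ - 1 + 1 = orderOf σ := by omega
        rw [this, pow_orderOf_eq_one, Equiv.Perm.one_apply]
      have := reachPow (orderOf σ - 1) q' hq' hq hpow
      exact this.symm
  -- step for edges of G
  have hGstep : ∀ v w : Fin m × Fin k, G.Adj v w →
      G'.Reachable (Sum.inl v.1) (Sum.inl w.1) := by
    have core : ∀ v w : Fin m × Fin k,
        ((v.1 = w.1 ∧ (v.2.val + 1 = w.2.val ∨ w.2.val + 1 = v.2.val)) ∨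
          (T v.1 v.2 = T w.1 w.2) ∨
          (T v.1 v.2 ≠ T w.1 w.2 ∧
            (σ (T v.1 v.2) = T w.1 w.2 ∨ σ (T w.1 w.2) = T v.1 v.2))) →
        G'.Reachable (Sum.inl v.1) (Sum.inl w.1) := by
      rintro v w (⟨h1, -⟩ | h2 | ⟨hne', h3 | h3⟩)
      · rw [h1]
      · have heq : (⟨T v.1 v.2, memS v.1 v.2⟩ : {q : Fin (k * m) // q ∈ S})
            = ⟨T w.1 w.2, memS w.1 w.2⟩ := Subtype.ext h2
        exact (adjIV v.1 v.2).reachable.trans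
          (heq ▸ (adjIV w.1 w.2).reachable.symm)
      · exact (adjIV v.1 v.2).reachable.trans
          ((reachVV _ _ h3 hne' (memS v.1 v.2) (memS w.1 w.2)).trans
            (adjIV w.1 w.2).reachable.symm)
      · exact (adjIV v.1 v.2).reachable.trans
          ((reachVV _ _ h3 (Ne.symm hne') (memS w.1 w.2) (memS v.1 v.2)).symm.trans
            (adjIV w.1 w.2).reachable.symm)
    intro v w hadj
    rw [hG, SimpleGraph.fromRel_adj] at hadj
    rcases hadj.2 with h | h
    · exact core v w h
    · exact (core w v h).symm
  have key : ∀ a b : Fin m × Fin k, G.Reachable a b →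
      G'.Reachable (Sum.inl a.1) (Sum.inl b.1) := by
    intro a b h
    refine h.elim (fun p => ?_)
    clear h
    induction p with
    | nil => rfl
    | cons hadj p ih => exact (hGstep _ _ hadj).trans ih
  have j0 : Fin k := ⟨0, hk⟩
  have reachInl : ∀ x : {q : Fin (k * m) // q ∈ S},
      ∃ i : Fin m, G'.Reachable (Sum.inr x) (Sum.inl i) := by
    intro x
    obtain ⟨⟨i, j⟩, -, hij⟩ := Finset.mem_image.mp x.2
    have heq : (⟨T i j, memS i j⟩ : {q : Fin (k * m) // q ∈ S}) = x := Subtype.ext hij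
    exact ⟨i, (heq ▸ (adjIV i j).reachable).symm⟩
  have reachLL : ∀ i i' : Fin m, G'.Reachable (Sum.inl i) (Sum.inl i') := by
    intro i i'
    exact key (i, j0) (i', j0) (hconn.preconnected (i, j0) (i', j0))
  have hG'conn : G'.Connected := by
    rw [SimpleGraph.connected_iff]
    refine ⟨?_, ⟨Sum.inl ⟨0, hm⟩⟩⟩
    intro a b
    cases a with
    | inl i =>
        cases b with
        | inl i' => exact reachLL i i'
        | inr x =>
            obtain ⟨i', hx⟩ := reachInl x
            exact (reachLL i i').trans hx.symm
    | inr x =>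
        obtain ⟨i', hx⟩ := reachInl x
        cases b with
        | inl i => exact hx.trans (reachLL i' i)
        | inr y =>
            obtain ⟨i'', hy⟩ := reachInl y
            exact hx.trans ((reachLL i' i'').trans hy.symm)
  -- edge count
  haveI : Fintype G'.edgeSet := Fintype.ofFinite _
  have hedge : G'.edgeFinset.card ≤ m * k + D.card := by
    classical
    set f : Sym2 (Fin m ⊕ {q : Fin (k * m) // q ∈ S}) → (Fin m × Fin k) ⊕ Fin (k * m) :=
      fun e =>
        if h : ∃ p : Fin m × Fin k, ∃ x : {q : Fin (k * m) // q ∈ S},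
            e = s(Sum.inl p.1, Sum.inr x) ∧ T p.1 p.2 = x.val then
          Sum.inl h.choose
        else if h2 : ∃ q : Fin (k * m), ∃ x y : {q : Fin (k * m) // q ∈ S},
            e = s(Sum.inr x, Sum.inr y) ∧ x.val = q ∧ q ∈ D ∧ σ q = y.val then
          Sum.inr h2.choose
        else Sum.inl (⟨0, hm⟩, ⟨0, hk⟩) with hfdef
    have hcases : ∀ e ∈ G'.edgeFinset,
        (∃ p : Fin m × Fin k, ∃ x : {q : Fin (k * m) // q ∈ S},
            e = s(Sum.inl p.1, Sum.inr x) ∧ T p.1 p.2 = x.val) ∨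
        (∃ q : Fin (k * m), ∃ x y : {q : Fin (k * m) // q ∈ S},
            e = s(Sum.inr x, Sum.inr y) ∧ x.val = q ∧ q ∈ D ∧ σ q = y.val) := by
      intro e he
      rw [SimpleGraph.mem_edgeFinset] at he
      induction e with
      | h v w =>
          rw [SimpleGraph.mem_edgeSet, hG'def, SimpleGraph.fromRel_adj] at he
          rcases he.2 with h | h <;> rw [hRdef] at h
          · rcases h with ⟨i, x, rfl, rfl, j, hj⟩ | ⟨x, y, rfl, rfl, hD, hs⟩
            · exact Or.inl ⟨(i, j), x, rfl, hj⟩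
            · exact Or.inr ⟨x.val, x, y, rfl, rfl, hD, hs⟩
          · rcases h with ⟨i, x, rfl, rfl, j, hj⟩ | ⟨x, y, rfl, rfl, hD, hs⟩
            · exact Or.inl ⟨(i, j), x, Sym2.eq_swap, hj⟩
            · exact Or.inr ⟨x.val, x, y, Sym2.eq_swap, rfl, hD, hs⟩
    have hmem : ∀ e ∈ G'.edgeFinset, f e ∈ (Finset.univ : Finset (Fin m × Fin k)).disjSum D := by
      intro e he
      simp only [hfdef]
      rcases hcases e he with h | h
      · rw [dif_pos h]
        simp
      · by_cases h1 : ∃ p : Fin m × Fin k, ∃ x : {q : Fin (k * m) // q ∈ S},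
            e = s(Sum.inl p.1, Sum.inr x) ∧ T p.1 p.2 = x.val
        · rw [dif_pos h1]; simp
        · rw [dif_neg h1, dif_pos h]
          simp only [Finset.inr_mem_disjSum]
          obtain ⟨x, y, -, hx, hD, -⟩ := h.choose_spec
          exact hx ▸ hD
    have hinj' : Set.InjOn f G'.edgeFinset := by
      intro a ha b hb hab
      simp only [hfdef] at hab
      by_cases h1a : ∃ p : Fin m × Fin k, ∃ x : {q : Fin (k * m) // q ∈ S},
          a = s(Sum.inl p.1, Sum.inr x) ∧ T p.1 p.2 = x.val
      · by_cases h1b : ∃ p : Fin m × Fin k, ∃ x : {q : Fin (k * m) // q ∈ S},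
            b = s(Sum.inl p.1, Sum.inr x) ∧ T p.1 p.2 = x.val
        · rw [dif_pos h1a, dif_pos h1b] at hab
          have heq := Sum.inl.inj hab
          obtain ⟨xa, hea, hxa⟩ := h1a.choose_spec
          obtain ⟨xb, heb, hxb⟩ := h1b.choose_spec
          rw [hea, heb, heq]
          have : xa = xb := Subtype.ext (by rw [← hxa, ← hxb, heq])
          rw [this]
        · exfalso
          rcases hcases b hb with h | h
          · exact h1b h
          · rw [dif_pos h1a, dif_neg h1b, dif_pos h] at hab
            exact Sum.inl_ne_inr hab
      · have h2a : ∃ q : Fin (k * m), ∃ x y : {q : Fin (k * m) // q ∈ S},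
            a = s(Sum.inr x, Sum.inr y) ∧ x.val = q ∧ q ∈ D ∧ σ q = y.val :=
          (hcases a ha).resolve_left h1a
        by_cases h1b : ∃ p : Fin m × Fin k, ∃ x : {q : Fin (k * m) // q ∈ S},
            b = s(Sum.inl p.1, Sum.inr x) ∧ T p.1 p.2 = x.val
        · exfalso
          rw [dif_neg h1a, dif_pos h2a, dif_pos h1b] at hab
          exact Sum.inr_ne_inl hab
        · have h2b : ∃ q : Fin (k * m), ∃ x y : {q : Fin (k * m) // q ∈ S},
              b = s(Sum.inr x, Sum.inr y) ∧ x.val = q ∧ q ∈ D ∧ σ q = y.val :=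
            (hcases b hb).resolve_left h1b
          rw [dif_neg h1a, dif_pos h2a, dif_neg h1b, dif_pos h2b] at hab
          have heq := Sum.inr.inj hab
          obtain ⟨xa, ya, hea, hxa, -, hya⟩ := h2a.choose_spec
          obtain ⟨xb, yb, heb, hxb, -, hyb⟩ := h2b.choose_spec
          rw [hea, heb]
          have hx : xa = xb := Subtype.ext (by rw [hxa, hxb, heq])
          have hy : ya = yb := Subtype.ext (by rw [← hya, ← hyb, heq])
          rw [hx, hy]
    have := Finset.card_le_card_of_injOn f hmem hinj'
    calc G'.edgeFinset.card ≤ ((Finset.univ : Finset (Fin m × Fin k)).disjSum D).card := this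
      _ = m * k + D.card := by
          rw [Finset.card_disjSum, Finset.card_univ, Fintype.card_prod,
            Fintype.card_fin, Fintype.card_fin]
  -- combine
  have hcount := my_card_le_edges G' hG'conn
  have hcardV : Fintype.card (Fin m ⊕ {q : Fin (k * m) // q ∈ S}) = m + S.card := by
    rw [Fintype.card_sum, Fintype.card_fin, Fintype.card_coe]
  rw [hcardV] at hcount
  have hScard : S.card ≤ k * m := by
    calc S.card ≤ Fintype.card (Fin (k * m)) := Finset.card_le_univ S
      _ = k * m := Fintype.card_fin _
  have hmk : m * k = k * m := Nat.mul_comm m k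
  by_cases hσ1 : σ = 1
  · have hsup : σ.support = ∅ := by simp [hσ1]
    have hD0 : D.card = 0 := by
      rw [hDdef, hsup]
      simp
    rw [if_neg (by simp [hσ1])]
    rw [hsup]
    simp only [Finset.card_empty]
    omega
  · have hq0' : σ q0 ≠ q0 := hq0 hσ1
    have hq0mem : q0 ∈ σ.support := Equiv.Perm.mem_support.mpr hq0'
    have hDcard : D.card = σ.support.card - 1 := Finset.card_erase_of_mem hq0mem
    have hsup1 : 1 ≤ σ.support.card := Finset.card_pos.mpr ⟨q0, hq0mem⟩
    rw [if_pos hσ1]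
    omega
end

section
/- With the same graph setup, suppose ({\bf T},σ) is irreducible (connected, and for no i does T_i have a unique connection point with σ fixing all other entries of T_i). Then km − |{\bf T}| + a(σ)/2 ≥ m. -/
open Finset

/-- for an irreducible `(T,σ)` pair (connected, and no `T_i` has a unique
connection point with `σ` fixing all other entries of `T_i`),
`km − |T| + a(σ)/2 ≥ m`, stated multiplied through by `2`. -/
theorem irreducible_graph_count (m k : ℕ) (hm : 1 ≤ m) (hk : 1 ≤ k)
    (T : Fin m → Fin k → Fin (k * m))
    (hinj : ∀ i, Function.Injective (T i))
    (σ : Equiv.Perm (Fin (k * m)))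
    (hσ : ∀ q, (∀ i j, T i j ≠ q) → σ q = q)
    (G : SimpleGraph (Fin m × Fin k))
    (hG : G = SimpleGraph.fromRel (fun v w =>
      (v.1 = w.1 ∧ (v.2.val + 1 = w.2.val ∨ w.2.val + 1 = v.2.val)) ∨
      (T v.1 v.2 = T w.1 w.2) ∨
      (T v.1 v.2 ≠ T w.1 w.2 ∧
        (σ (T v.1 v.2) = T w.1 w.2 ∨ σ (T w.1 w.2) = T v.1 v.2))))
    (hconn : G.Connected)
    -- a connection point of row `i` is an entry `T i j` with `σ(T i j) ∉ T_i` or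
    -- `T i j ∈ T_{i'}` for some `i' ≠ i`
    (connPoint : Fin m → Fin k → Prop)
    (hconnPoint : ∀ i j, connPoint i j ↔
      ((∀ j', σ (T i j) ≠ T i j') ∨ (∃ i', i' ≠ i ∧ ∃ j', T i' j' = T i j)))
    -- irreducibility: no row breaks at a unique connection point
    (hirr : ¬ ∃ i j, (∀ j', j' ≠ j → ¬ connPoint i j') ∧
      (∀ j', j' ≠ j → σ (T i j') = T i j')) :
    2 * (k * m) + σ.support.card
      ≥ 2 * (Finset.image (fun p : Fin m × Fin k => T p.1 p.2) Finset.univ).card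
        + 2 * m := by
  classical
  -- `V` : set of values, `r v` : number of occurrences of value `v`
  set V : Finset (Fin (k * m)) :=
    Finset.image (fun p : Fin m × Fin k => T p.1 p.2) Finset.univ with hV
  set r : Fin (k * m) → ℕ := fun v =>
    (Finset.univ.filter (fun p : Fin m × Fin k => T p.1 p.2 = v)).card with hr
  -- the weight of a value
  set f : Fin (k * m) → ℚ := fun v =>
    (2 * ((r v : ℚ) - 1) + if σ v ≠ v then 1 else 0) / (r v : ℚ) with hf
  -- every value occurring in `T` has `r v ≥ 1`
  have hr1 : ∀ i j, 1 ≤ r (T i j) := by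
    intro i j
    have hmem : (⟨i, j⟩ : Fin m × Fin k) ∈
        Finset.univ.filter (fun p : Fin m × Fin k => T p.1 p.2 = T i j) := by
      simp
    exact Finset.card_pos.2 ⟨_, hmem⟩
  -- weights are nonnegative on values of `T`
  have hf0 : ∀ i j, 0 ≤ f (T i j) := by
    intro i j
    have h1 : (1 : ℚ) ≤ (r (T i j) : ℚ) := by exact_mod_cast hr1 i j
    have hite : (0 : ℚ) ≤ if σ (T i j) ≠ T i j then 1 else 0 := by positivity
    apply div_nonneg
    · nlinarith
    · linarith
  -- the key predicate: entry `j` of row `i` is shared with another row, or moved by `σ`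
  set P : Fin m → Fin k → Prop := fun i j =>
    (∃ i', i' ≠ i ∧ ∃ j', T i' j' = T i j) ∨ σ (T i j) ≠ T i j with hP
  -- entries satisfying `P` have weight at least 1
  have hfP : ∀ i j, P i j → 1 ≤ f (T i j) := by
    intro i j hp
    have h1 : (1 : ℚ) ≤ (r (T i j) : ℚ) := by exact_mod_cast hr1 i j
    have hpos : (0 : ℚ) < (r (T i j) : ℚ) := by linarith
    have hite : (0 : ℚ) ≤ if σ (T i j) ≠ T i j then 1 else 0 := by positivity
    rw [hf, one_le_div hpos]
    rcases hp with hsh | hmv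
    · -- shared value: it occurs at two distinct pairs, so `r ≥ 2`
      obtain ⟨i', hi', j', hj'⟩ := hsh
      have h2 : 2 ≤ r (T i j) := by
        rw [hr]
        apply Finset.one_lt_card.2
        refine ⟨⟨i', j'⟩, by simp [hj'], ⟨i, j⟩, by simp, ?_⟩
        simp only [ne_eq, Prod.mk.injEq, not_and]
        intro h
        exact absurd h hi'
      have h2' : (2 : ℚ) ≤ (r (T i j) : ℚ) := by exact_mod_cast h2
      linarith
    · rw [if_pos hmv]
      linarith
  -- irreducibility: every row has at least two `P`-entries
  have key : ∀ i (j : Fin k), ∃ j', j' ≠ j ∧ P i j' := by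
    intro i j
    by_cases hc : ∃ j', j' ≠ j ∧ connPoint i j'
    · obtain ⟨j', hj'ne, hcp⟩ := hc
      rcases (hconnPoint i j').1 hcp with h | h
      · exact ⟨j', hj'ne, Or.inr (h j')⟩
      · exact ⟨j', hj'ne, Or.inl h⟩
    · push_neg at hc
      by_contra hno
      push_neg at hno
      refine hirr ⟨i, j, hc, fun j' hj' => ?_⟩
      have h := hno j' hj'
      simp only [hP] at h
      push_neg at h
      exact h.2
  -- hence each row contributes at least `2` to the total weight
  have hrow : ∀ i : Fin m, (2 : ℚ) ≤ ∑ j : Fin k, f (T i j) := by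
    intro i
    obtain ⟨j1, _, hP1⟩ := key i ⟨0, hk⟩
    obtain ⟨j2, hne, hP2⟩ := key i j1
    have hstep : (2 : ℚ) ≤ ∑ j ∈ ({j1, j2} : Finset (Fin k)), f (T i j) := by
      rw [Finset.sum_pair (Ne.symm hne)]
      have h1 := hfP i j1 hP1
      have h2 := hfP i j2 hP2
      linarith
    refine hstep.trans (Finset.sum_le_sum_of_subset_of_nonneg
      (Finset.subset_univ _) ?_)
    intro j _ _
    exact hf0 i j
  -- `σ`'s support is contained in the values of `T`
  have hfilter : V.filter (fun v => σ v ≠ v) = σ.support := by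
    ext v
    simp only [Finset.mem_filter, Equiv.Perm.mem_support, ne_eq]
    constructor
    · rintro ⟨_, h⟩; exact h
    · intro h
      refine ⟨?_, h⟩
      by_contra hv
      apply h
      apply hσ
      intro i j hTij
      apply hv
      rw [hV, ← hTij]
      exact Finset.mem_image_of_mem _ (Finset.mem_univ (⟨i, j⟩ : Fin m × Fin k))
  -- total weight identity
  have hmaps : ∀ p ∈ (Finset.univ : Finset (Fin m × Fin k)),
      T p.1 p.2 ∈ V := by
    intro p _
    exact Finset.mem_image_of_mem _ (Finset.mem_univ p)
  have hcards : ∑ v ∈ V, r v = k * m := by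
    have h := Finset.card_eq_sum_card_fiberwise hmaps
    simp only [Finset.card_univ, Fintype.card_prod, Fintype.card_fin] at h
    have h2 : ∑ v ∈ V, r v = m * k := h.symm
    exact h2.trans (Nat.mul_comm m k)
  have htot : ∑ p : Fin m × Fin k, f (T p.1 p.2)
      = 2 * ((k * m : ℕ) : ℚ) - 2 * (V.card : ℚ) + (σ.support.card : ℚ) := by
    rw [← Finset.sum_fiberwise_of_maps_to' hmaps f]
    have hterm : ∀ v ∈ V,
        (∑ _p ∈ Finset.univ.filter (fun p : Fin m × Fin k => T p.1 p.2 = v), f v)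
          = 2 * ((r v : ℚ) - 1) + if σ v ≠ v then 1 else 0 := by
      intro v hv
      obtain ⟨p, _, hp⟩ := Finset.mem_image.1 hv
      have hrv : (r v : ℚ) ≠ 0 := by
        have := hr1 p.1 p.2
        rw [hp] at this
        exact_mod_cast Nat.one_le_iff_ne_zero.1 this
      rw [Finset.sum_const]
      show (r v) • f v = _
      rw [nsmul_eq_mul]
      simp only [hf]
      field_simp
    rw [Finset.sum_congr rfl hterm]
    rw [Finset.sum_add_distrib]
    have e1 : ∑ v ∈ V, (2 * ((r v : ℚ) - 1))
        = 2 * ((k * m : ℕ) : ℚ) - 2 * (V.card : ℚ) := by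
      calc ∑ v ∈ V, (2 * ((r v : ℚ) - 1))
          = ∑ v ∈ V, (2 * (r v : ℚ) - 2) :=
            Finset.sum_congr rfl (fun v _ => by ring)
        _ = (∑ v ∈ V, 2 * (r v : ℚ)) - ∑ _v ∈ V, (2 : ℚ) :=
            Finset.sum_sub_distrib _ _
        _ = 2 * ((k * m : ℕ) : ℚ) - 2 * (V.card : ℚ) := by
            rw [← Finset.mul_sum, ← Nat.cast_sum, hcards, Finset.sum_const,
              nsmul_eq_mul, mul_comm (V.card : ℚ)]
    have e2 : (∑ v ∈ V, if σ v ≠ v then (1 : ℚ) else 0) = (σ.support.card : ℚ) := by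
      rw [Finset.sum_boole, hfilter]
    rw [e1, e2]
  -- put everything together
  have hsum : (2 : ℚ) * (m : ℚ) ≤ ∑ p : Fin m × Fin k, f (T p.1 p.2) := by
    rw [Fintype.sum_prod_type]
    have : (2 : ℚ) * (m : ℚ) = ∑ _i : Fin m, (2 : ℚ) := by
      rw [Finset.sum_const, Finset.card_univ, Fintype.card_fin, nsmul_eq_mul,
        mul_comm]
    rw [this]
    exact Finset.sum_le_sum fun i _ => hrow i
  rw [htot] at hsum
  rw [ge_iff_le, ← Nat.cast_le (α := ℚ)]
  push_cast
  push_cast at hsum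
  linarith
end
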